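/- Let n ≥ k ≥ 1 and let Q ∈ ℂ^{n×n} be the cyclic shift matrix. For each j = 1,…,k let α_j ∈ ℂ, let x_j ∈ ℂ^n be such that (Q x_j)(i) = 0 for every i > n − j + 1 (i.e. Q x_j has j−1 trailing zeros), set y_j = α_j e_n, and define S_j = Q(I_n + x_j y_j^T). Then for every j ∈ {1,…,k}: S_1 S_2 ⋯ S_{j−1} (Q x_j) = Q^j x_j and y_j^T S_{j+1} ⋯ S_k = y_j^T Q^{k−j} (with empty products interpreted as the identity). -/

import Mathlib

open Matrix

noncomputable section

/-- The `n × n` cyclic shift matrix `Q`: `Q e_i = e_{i+1}` for `i < n`, `Q e_n = e_1`. -/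
def cyclicShift (n : ℕ) : Matrix (Fin n) (Fin n) ℂ :=
  fun p q => if (p : ℕ) = ((q : ℕ) + 1) % n then 1 else 0

/-- The factor `S_j = Q (I + x_j y_jᵀ)` of the Frobenius factorization, with
`y_j = α_j e_n` (here `t` is the 0-based index of the factor). -/
def frobFactor (n k : ℕ) (hn : 0 < n) (α : Fin k → ℂ) (x : Fin k → Fin n → ℂ)
    (t : Fin k) : Matrix (Fin n) (Fin n) ℂ :=
  cyclicShift n *
    (1 + vecMulVec (x t) (α t • (Pi.single (⟨n - 1, by omega⟩ : Fin n) 1 : Fin n → ℂ)))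

lemma cyc_aux1 {n : ℕ} (hn : 0 < n) {a : ℕ} (ha : a < n) :
    ((a + n - 1) % n + 1) % n = a := by
  rw [Nat.mod_add_mod]
  have h1 : a + n - 1 + 1 = a + n := by omega
  rw [h1, Nat.add_mod_right, Nat.mod_eq_of_lt ha]

lemma cyc_aux2 {n : ℕ} (hn : 0 < n) {q : ℕ} (hq : q < n) :
    ((q + 1) % n + n - 1) % n = q := by
  rcases eq_or_lt_of_le (Nat.succ_le_of_lt hq) with h | h
  · have h0 : (q + 1) % n = 0 := by rw [show q + 1 = n from h, Nat.mod_self]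
    rw [h0, Nat.mod_eq_of_lt (by omega)]
    omega
  · rw [Nat.mod_eq_of_lt h]
    have h1 : q + 1 + n - 1 = q + n := by omega
    rw [h1, Nat.add_mod_right, Nat.mod_eq_of_lt hq]

lemma cyclicShift_mulVec_apply {n : ℕ} (hn : 0 < n) (v : Fin n → ℂ) (i : Fin n) :
    (cyclicShift n).mulVec v i = v ⟨((i : ℕ) + n - 1) % n, Nat.mod_lt _ hn⟩ := by
  simp only [cyclicShift, mulVec, dotProduct]
  rw [Finset.sum_eq_single (⟨((i : ℕ) + n - 1) % n, Nat.mod_lt _ hn⟩ : Fin n)]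
  · rw [if_pos (by simpa using (cyc_aux1 hn i.isLt).symm), one_mul]
  · intro q _ hq
    rw [if_neg, zero_mul]
    intro h
    exact hq (Fin.ext (by simp only [h, cyc_aux2 hn q.isLt]))
  · intro h; exact absurd (Finset.mem_univ _) h

lemma cyclicShift_vecMul_apply {n : ℕ} (hn : 0 < n) (u : Fin n → ℂ) (q : Fin n) :
    Matrix.vecMul u (cyclicShift n) q = u ⟨((q : ℕ) + 1) % n, Nat.mod_lt _ hn⟩ := by
  simp only [cyclicShift, vecMul, dotProduct]
  rw [Finset.sum_eq_single (⟨((q : ℕ) + 1) % n, Nat.mod_lt _ hn⟩ : Fin n)]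
  · rw [if_pos rfl, mul_one]
  · intro p _ hp
    rw [if_neg, mul_zero]
    intro h
    exact hp (Fin.ext h)
  · intro h; exact absurd (Finset.mem_univ _) h

lemma vecMulVec_mulVec' {n : ℕ} (x y v : Fin n → ℂ) :
    (vecMulVec x y).mulVec v = (y ⬝ᵥ v) • x := by
  ext i
  simp only [vecMulVec_apply, mulVec, dotProduct, Pi.smul_apply, smul_eq_mul]
  rw [Finset.sum_mul]
  exact Finset.sum_congr rfl fun q _ => by ring

lemma vecMul_vecMulVec' {n : ℕ} (u x y : Fin n → ℂ) :
    Matrix.vecMul u (vecMulVec x y) = (u ⬝ᵥ x) • y := by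
  ext j
  simp only [vecMulVec_apply, vecMul, dotProduct, Pi.smul_apply, smul_eq_mul,
    Finset.sum_mul, mul_assoc]

/-- If the last entry of `v` vanishes then `S_t v = Q v`. -/
lemma frobFactor_mulVec {n k : ℕ} (hn : 0 < n) (α : Fin k → ℂ) (x : Fin k → Fin n → ℂ)
    (t : Fin k) (v : Fin n → ℂ) (hv : v ⟨n - 1, by omega⟩ = 0) :
    (frobFactor n k hn α x t).mulVec v = (cyclicShift n).mulVec v := by
  unfold frobFactor
  rw [← mulVec_mulVec]
  rw [add_mulVec, one_mulVec, vecMulVec_mulVec']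
  have : (α t • (Pi.single (⟨n - 1, by omega⟩ : Fin n) 1 : Fin n → ℂ)) ⬝ᵥ v = 0 := by
    rw [smul_dotProduct, single_dotProduct, one_mul, hv, smul_zero]
  rw [this, zero_smul, add_zero]

/-- Left induction: applying the product of the first `m` factors to a vector with
`m` trailing zeros just shifts it `m` times. -/
lemma left_prod_mulVec {n k : ℕ} (hn : 0 < n) (hkn : k ≤ n) (α : Fin k → ℂ)
    (x : Fin k → Fin n → ℂ) :
    ∀ m, m ≤ k → ∀ v : Fin n → ℂ, (∀ i : Fin n, n ≤ (i : ℕ) + m → v i = 0) →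
      (((List.finRange k).take m).map (frobFactor n k hn α x)).prod.mulVec v
        = ((cyclicShift n) ^ m).mulVec v := by
  intro m
  induction m with
  | zero => intro _ v _; simp
  | succ m ih =>
    intro hm v hv
    have hmk : m < k := hm
    rw [List.take_succ]
    have hget : (List.finRange k)[m]? = some ⟨m, hmk⟩ := by
      simp [List.getElem?_eq_getElem, hmk]
    rw [hget]
    simp only [Option.toList_some, List.map_append, List.map_cons, List.map_nil,
      List.prod_append, List.prod_cons, List.prod_nil, mul_one]
    rw [← mulVec_mulVec]
    rw [frobFactor_mulVec hn α x ⟨m, hmk⟩ v (hv _ (by simp; omega))]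
    rw [pow_succ, ← mulVec_mulVec]
    apply ih (le_of_lt hmk)
    intro i hi
    rw [cyclicShift_mulVec_apply hn]
    have hidx : ((i : ℕ) + n - 1) % n = (i : ℕ) - 1 := by
      have h1 : 1 ≤ (i : ℕ) := by omega
      have h2 : (i : ℕ) + n - 1 = ((i : ℕ) - 1) + n := by omega
      rw [h2, Nat.add_mod_right, Nat.mod_eq_of_lt (by omega)]
    exact hv _ (by simp only [hidx]; omega)

/-- `e_pᵀ Q = e_{p-1}ᵀ` for `1 ≤ p`. -/
lemma single_vecMul_cyclicShift {n : ℕ} (hn : 0 < n) (p : ℕ) (h1 : 1 ≤ p) (h2 : p < n) :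
    Matrix.vecMul (Pi.single (⟨p, h2⟩ : Fin n) (1 : ℂ)) (cyclicShift n)
      = Pi.single (⟨p - 1, by omega⟩ : Fin n) (1 : ℂ) := by
  ext q
  rw [cyclicShift_vecMul_apply hn, Pi.single_apply, Pi.single_apply]
  simp only [Fin.ext_iff]
  have hm : (((q : ℕ) + 1) % n = p) ↔ ((q : ℕ) = p - 1) := by
    rcases eq_or_lt_of_le (Nat.succ_le_of_lt q.isLt) with h | h
    · have h0 : ((q : ℕ) + 1) % n = 0 := by rw [show (q : ℕ) + 1 = n from h, Nat.mod_self]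
      rw [h0]
      omega
    · rw [Nat.mod_eq_of_lt h]
      omega
  simp only [hm]

/-- Right induction: `e_{n-1-t}ᵀ · (product of last `m` factors) = e_{n-1-t}ᵀ Q^m`
when `t + m < k`. -/
lemma right_prod_vecMul {n k : ℕ} (hn : 0 < n) (hkn : k ≤ n) (α : Fin k → ℂ)
    (x : Fin k → Fin n → ℂ)
    (hx : ∀ (j : Fin k) (i : Fin n), n ≤ (i : ℕ) + (j : ℕ) →
      (cyclicShift n).mulVec (x j) i = 0) :
    ∀ m t : ℕ, t + m < k →
      Matrix.vecMul (Pi.single (⟨n - 1 - t, by omega⟩ : Fin n) (1 : ℂ))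
        (((List.finRange k).drop (k - m)).map (frobFactor n k hn α x)).prod
      = Matrix.vecMul (Pi.single (⟨n - 1 - t, by omega⟩ : Fin n) (1 : ℂ))
          ((cyclicShift n) ^ m) := by
  intro m
  induction m with
  | zero =>
    intro t _
    rw [Nat.sub_zero, List.drop_eq_nil_of_le (by simp)]
    simp
  | succ m ih =>
    intro t ht
    set s := k - (m + 1) with hs
    have hsk : s < k := by omega
    have hlen : s < (List.finRange k).length := by simpa using hsk
    rw [List.drop_eq_getElem_cons hlen]
    simp only [List.getElem_finRange, Fin.cast_mk, List.map_cons, List.prod_cons]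
    rw [← vecMul_vecMul]
    have hstep : Matrix.vecMul (Pi.single (⟨n - 1 - t, by omega⟩ : Fin n) (1 : ℂ))
        (frobFactor n k hn α x ⟨s, hsk⟩)
        = Pi.single (⟨n - 1 - (t + 1), by omega⟩ : Fin n) (1 : ℂ) := by
      unfold frobFactor
      rw [← vecMul_vecMul]
      have hq : Matrix.vecMul (Pi.single (⟨n - 1 - t, by omega⟩ : Fin n) (1 : ℂ))
          (cyclicShift n) = Pi.single (⟨n - 1 - (t + 1), by omega⟩ : Fin n) (1 : ℂ) := by
        have := single_vecMul_cyclicShift hn (n - 1 - t) (by omega) (by omega)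
        convert this using 3
        omega
      rw [hq, vecMul_add, vecMul_one, vecMul_vecMulVec']
      have hdot : (Pi.single (⟨n - 1 - (t + 1), by omega⟩ : Fin n) (1 : ℂ)) ⬝ᵥ x ⟨s, hsk⟩
          = 0 := by
        rw [single_dotProduct, one_mul]
        have := hx ⟨s, hsk⟩ ⟨n - 1 - t, by omega⟩ (by simp; omega)
        rw [cyclicShift_mulVec_apply hn] at this
        have hidx : (n - 1 - t + n - 1) % n = n - 1 - (t + 1) := by
          have h2 : n - 1 - t + n - 1 = (n - 1 - (t + 1)) + n := by omega
          rw [h2, Nat.add_mod_right, Nat.mod_eq_of_lt (by omega)]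
        convert this using 2
        rw [Fin.ext_iff]
        simp [hidx]
      rw [hdot, zero_smul, add_zero]
    rw [hstep]
    have hdrop : k - m = s + 1 := by omega
    rw [← hdrop]
    rw [ih (t + 1) (by omega)]
    rw [pow_succ', ← vecMul_vecMul]
    have hq : Matrix.vecMul (Pi.single (⟨n - 1 - t, by omega⟩ : Fin n) (1 : ℂ))
        (cyclicShift n) = Pi.single (⟨n - 1 - (t + 1), by omega⟩ : Fin n) (1 : ℂ) := by
      have := single_vecMul_cyclicShift hn (n - 1 - t) (by omega) (by omega)
      convert this using 3
      omega
    rw [hq]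

/-- For the Frobenius factorization: `S₁ ⋯ S_{j−1} (Q x_j) = Q^j x_j` and
`y_jᵀ S_{j+1} ⋯ S_k = y_jᵀ Q^{k−j}`. -/
theorem frobenius_factors_shift_vectors (n k : ℕ) (hk : 1 ≤ k) (hkn : k ≤ n)
    (α : Fin k → ℂ) (x : Fin k → Fin n → ℂ)
    (hx : ∀ (j : Fin k) (i : Fin n), n ≤ (i : ℕ) + (j : ℕ) →
      (cyclicShift n).mulVec (x j) i = 0) :
    ∀ j : Fin k,
      ((((List.finRange k).take (j : ℕ)).map
          (frobFactor n k (by omega) α x)).prod).mulVec ((cyclicShift n).mulVec (x j))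
        = ((cyclicShift n) ^ ((j : ℕ) + 1)).mulVec (x j) ∧
      Matrix.vecMul (α j • (Pi.single (⟨n - 1, by omega⟩ : Fin n) 1 : Fin n → ℂ))
          ((((List.finRange k).drop ((j : ℕ) + 1)).map
            (frobFactor n k (by omega) α x)).prod)
        = Matrix.vecMul (α j • (Pi.single (⟨n - 1, by omega⟩ : Fin n) 1 : Fin n → ℂ))
            ((cyclicShift n) ^ (k - 1 - (j : ℕ))) := by
  have hn : 0 < n := by omega
  intro j
  constructor
  · rw [left_prod_mulVec hn hkn α x (j : ℕ) (le_of_lt j.isLt)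
      ((cyclicShift n).mulVec (x j)) (fun i hi => hx j i hi)]
    rw [pow_succ, ← mulVec_mulVec]
  · rw [smul_vecMul, smul_vecMul]
    congr 1
    have hdrop : (j : ℕ) + 1 = k - (k - 1 - (j : ℕ)) := by omega
    rw [hdrop]
    have := right_prod_vecMul hn hkn α x hx (k - 1 - (j : ℕ)) 0 (by omega)
    convert this using 3
    all_goals simp

end
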